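/- arXiv:2012.03102 — 3 statements merged into one kernel-verified Lean document; each statement's English description precedes it below -/
import Mathlib

section
/- The series Σ_{k=2}^{∞} (ζ(k) − 1)/k converges and equals 1 − γ, where ζ is the Riemann zeta function and γ is the Euler–Mascheroni constant. -/
set_option maxHeartbeats 1000000

open Filter Real Finset

/-- Inner sum over `k` for fixed `x`: `Σ_{k≥0} x^(k+2)/(k+2) = -log(1-x) - x`. -/
lemma aux_log_hasSum {x : ℝ} (h : |x| < 1) :
    HasSum (fun k : ℕ => x ^ (k + 2) / (k + 2)) (-Real.log (1 - x) - x) := by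
  have H := Real.hasSum_pow_div_log_of_abs_lt_one h
  have := (hasSum_nat_add_iff' (f := fun n : ℕ => x ^ (n + 1) / (n + 1)) 1
    (g := -Real.log (1 - x))).mpr H
  simp only [Finset.range_one, Finset.sum_singleton, pow_one, Nat.cast_zero, zero_add,
    div_one] at this
  convert this using 2 with k
  case e'_3 => rfl
  push_cast
  ring_nf

/-- Summability of the `n` direction: `Σ_n ((n+2)⁻¹)^2` converges. -/
lemma aux_sq_summable : Summable (fun n : ℕ => (((n : ℝ) + 2)⁻¹) ^ 2) := by
  have h : Summable (fun n : ℕ => 1 / (n : ℝ) ^ 2) := summable_one_div_nat_pow.mpr one_lt_two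
  have := (summable_nat_add_iff 2).mpr h
  refine this.congr fun n => ?_
  push_cast
  rw [one_div, inv_pow]

lemma aux_x_mem (n : ℕ) : 0 < ((n : ℝ) + 2)⁻¹ ∧ ((n : ℝ) + 2)⁻¹ ≤ 1 / 2 := by
  constructor
  · positivity
  · rw [one_div]
    apply inv_anti₀ two_pos
    linarith [Nat.cast_nonneg (α := ℝ) n]

/-- The double-indexed family is summable. -/
lemma aux_g_summable :
    Summable (fun p : ℕ × ℕ => (((p.1 : ℝ) + 2)⁻¹) ^ (p.2 + 2) / (p.2 + 2)) := by
  have hs : Summable (fun p : ℕ × ℕ => (((p.1 : ℝ) + 2)⁻¹) ^ 2 * (2⁻¹ : ℝ) ^ p.2) :=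
    aux_sq_summable.mul_of_nonneg (summable_geometric_of_lt_one (by norm_num) (by norm_num))
      (fun n => by positivity) (fun k => by positivity)
  refine hs.of_nonneg_of_le (fun p => by positivity) fun p => ?_
  obtain ⟨n, k⟩ := p
  obtain ⟨hx0, hx2⟩ := aux_x_mem n
  calc (((n : ℝ) + 2)⁻¹) ^ (k + 2) / (k + 2)
      ≤ (((n : ℝ) + 2)⁻¹) ^ (k + 2) := by
        apply div_le_self (by positivity)
        have : (0 : ℝ) ≤ (k : ℝ) := Nat.cast_nonneg k
        linarith
    _ = (((n : ℝ) + 2)⁻¹) ^ 2 * (((n : ℝ) + 2)⁻¹) ^ k := by ring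
    _ ≤ (((n : ℝ) + 2)⁻¹) ^ 2 * (2⁻¹ : ℝ) ^ k := by
        apply mul_le_mul_of_nonneg_left _ (by positivity)
        exact pow_le_pow_left₀ hx0.le (by simpa [one_div] using hx2) k

/-- Row sums: for each `n`, `Σ_k ((n+2)⁻¹)^(k+2)/(k+2) = -log(1 - (n+2)⁻¹) - (n+2)⁻¹`. -/
lemma aux_row (n : ℕ) :
    HasSum (fun k : ℕ => (((n : ℝ) + 2)⁻¹) ^ (k + 2) / (k + 2))
      (-Real.log (1 - ((n : ℝ) + 2)⁻¹) - ((n : ℝ) + 2)⁻¹) := by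
  obtain ⟨hx0, hx2⟩ := aux_x_mem n
  exact aux_log_hasSum (by rw [abs_of_pos hx0]; linarith)

/-- The telescoping limit : partial sums of the row sums tend to `1 - γ`. -/
lemma aux_telescope :
    Tendsto (fun N : ℕ => ∑ n ∈ Finset.range N,
      (-Real.log (1 - ((n : ℝ) + 2)⁻¹) - ((n : ℝ) + 2)⁻¹)) atTop
      (nhds (1 - Real.eulerMascheroniConstant)) := by
  have hlog : ∀ n : ℕ, -Real.log (1 - ((n : ℝ) + 2)⁻¹)
      = Real.log ((n : ℝ) + 1 + 1) - Real.log ((n : ℝ) + 1) := by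
    intro n
    have h2 : (0 : ℝ) < (n : ℝ) + 2 := by positivity
    have : 1 - ((n : ℝ) + 2)⁻¹ = ((n : ℝ) + 1) / ((n : ℝ) + 2) := by
      field_simp
      ring
    have e : (n : ℝ) + 1 + 1 = (n : ℝ) + 2 := by ring
    rw [e, this, Real.log_div (by positivity) (by positivity)]
    ring
  have hsum : ∀ N : ℕ, ∑ n ∈ Finset.range N,
      (-Real.log (1 - ((n : ℝ) + 2)⁻¹) - ((n : ℝ) + 2)⁻¹)
      = 1 - ((harmonic (N + 1) : ℝ) - Real.log ((N : ℝ) + 1)) := by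
    intro N
    rw [Finset.sum_sub_distrib]
    have h1 : ∑ n ∈ Finset.range N, -Real.log (1 - ((n : ℝ) + 2)⁻¹)
        = Real.log ((N : ℝ) + 1) := by
      have := Finset.sum_range_sub (f := fun n : ℕ => Real.log ((n : ℝ) + 1)) N
      simp only [Nat.cast_zero, zero_add, Real.log_one, sub_zero] at this
      rw [← this]
      refine Finset.sum_congr rfl fun n _ => ?_
      rw [hlog n]
      push_cast
      ring_nf
    have h2 : ∑ n ∈ Finset.range N, ((n : ℝ) + 2)⁻¹ = (harmonic (N + 1) : ℝ) - 1 := by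
      have hh : (harmonic (N + 1) : ℝ) = ∑ i ∈ Finset.range (N + 1), ((i : ℝ) + 1)⁻¹ := by
        rw [harmonic]
        push_cast
        rfl
      rw [hh, Finset.sum_range_succ' (fun i : ℕ => ((i : ℝ) + 1)⁻¹) N]
      simp only [Nat.cast_add, Nat.cast_one, Nat.cast_zero, zero_add, inv_one]
      rw [add_sub_cancel_right]
      exact Finset.sum_congr rfl fun i _ => by ring_nf
    rw [h1, h2]
    ring
  simp only [hsum]
  have hγ : Tendsto (fun N : ℕ => (harmonic (N + 1) : ℝ) - Real.log ((N : ℝ) + 1)) atTop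
      (nhds Real.eulerMascheroniConstant) := by
    have := Real.tendsto_harmonic_sub_log.comp (tendsto_add_atTop_nat 1)
    refine this.congr fun N => ?_
    simp [Function.comp]
  exact tendsto_const_nhds.sub hγ

/-- The real version of the main theorem. -/
lemma aux_colsummable (k : ℕ) : Summable (fun n : ℕ => (((n : ℝ) + 2)⁻¹) ^ (k + 2)) := by
  refine aux_sq_summable.of_nonneg_of_le (fun n => by positivity) fun n => ?_
  obtain ⟨hx0, hx2⟩ := aux_x_mem n
  exact pow_le_pow_of_le_one hx0.le (by linarith) (by omega)

/-- The real version of the main theorem. -/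
lemma aux_real : HasSum (fun k : ℕ => (∑' n : ℕ, (((n : ℝ) + 2)⁻¹) ^ (k + 2)) / (k + 2))
    (1 - Real.eulerMascheroniConstant) := by
  set g : ℕ × ℕ → ℝ := fun p => (((p.1 : ℝ) + 2)⁻¹) ^ (p.2 + 2) / (p.2 + 2) with hg
  have hG : HasSum g (∑' p, g p) := aux_g_summable.hasSum
  -- sum by rows (first coordinate n)
  have hRow : HasSum (fun n : ℕ => -Real.log (1 - ((n : ℝ) + 2)⁻¹) - ((n : ℝ) + 2)⁻¹)
      (∑' p, g p) := hG.prod_fiberwise fun n => aux_row n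
  have hT : (∑' p, g p) = 1 - Real.eulerMascheroniConstant :=
    tendsto_nhds_unique hRow.tendsto_sum_nat aux_telescope
  -- sum by columns (second coordinate k)
  have hswap : HasSum (fun p : ℕ × ℕ => g p.swap) (∑' p, g p) :=
    ((Equiv.prodComm ℕ ℕ).hasSum_iff).mpr hG
  have hCol : HasSum (fun k : ℕ => (∑' n : ℕ, (((n : ℝ) + 2)⁻¹) ^ (k + 2)) / (k + 2))
      (∑' p, g p) := by
    refine hswap.prod_fiberwise fun k => ?_
    exact ((aux_colsummable k).hasSum).div_const _
  rwa [hT] at hCol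

/-- `ζ(k+2) - 1` as a real series. -/
lemma aux_zeta (k : ℕ) :
    riemannZeta ((k : ℂ) + 2) - 1 = ((∑' n : ℕ, (((n : ℝ) + 2)⁻¹) ^ (k + 2) : ℝ) : ℂ) := by
  have hk : 1 < k + 2 := by omega
  have h1 : riemannZeta ((k : ℂ) + 2) = ∑' n : ℕ, 1 / (n : ℂ) ^ (k + 2) := by
    have := zeta_nat_eq_tsum_of_gt_one hk
    rwa [show ((k + 2 : ℕ) : ℂ) = (k : ℂ) + 2 by push_cast; ring] at this
  have hsummable : Summable (fun n : ℕ => 1 / (n : ℂ) ^ (k + 2)) := by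
    apply Summable.of_norm
    have : Summable (fun n : ℕ => 1 / (n : ℝ) ^ (k + 2)) :=
      summable_one_div_nat_pow.mpr hk
    refine this.congr fun n => ?_
    simp [norm_div, norm_pow]
  rw [h1, Summable.tsum_eq_zero_add hsummable, Summable.tsum_eq_zero_add ((summable_nat_add_iff 1).mpr hsummable)]
  have hreal : HasSum (fun n : ℕ => ((((((n : ℝ) + 2)⁻¹) ^ (k + 2) : ℝ)) : ℂ))
      ((∑' n : ℕ, (((n : ℝ) + 2)⁻¹) ^ (k + 2) : ℝ) : ℂ) :=
    Complex.hasSum_ofReal.mpr (aux_colsummable k).hasSum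
  have heq : (fun n : ℕ => 1 / ((n : ℂ) + 1 + 1) ^ (k + 2))
      = fun n : ℕ => ((((((n : ℝ) + 2)⁻¹) ^ (k + 2) : ℝ)) : ℂ) := by
    funext n
    push_cast
    rw [one_div, ← inv_pow]
    norm_num
    ring_nf
  simp only [Nat.cast_zero, Nat.cast_add, Nat.cast_one]
  rw [zero_pow (by omega), div_zero, zero_add, zero_add, one_pow, div_one]
  rw [show (fun n : ℕ => 1 / ((n : ℂ) + 1 + 1) ^ (k + 2)) = _ from heq, hreal.tsum_eq]
  ring

/-- The series `Σ_{k=2}^{∞} (ζ(k) − 1)/k` converges and equals `1 − γ`, where `ζ` is the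
Riemann zeta function and `γ` is the Euler–Mascheroni constant. -/
theorem hasSum_zeta_sub_one_div : HasSum (fun k : ℕ => (riemannZeta (k + 2) - 1) / (k + 2))
    ((1 : ℂ) - (Real.eulerMascheroniConstant : ℂ)) := by
  have h := Complex.hasSum_ofReal.mpr aux_real
  have : ((1 - Real.eulerMascheroniConstant : ℝ) : ℂ)
      = (1 : ℂ) - (Real.eulerMascheroniConstant : ℂ) := by push_cast; ring
  rw [this] at h
  have hfun : (fun k : ℕ => (riemannZeta (k + 2) - 1) / (k + 2))
      = fun k : ℕ => (((∑' n : ℕ, (((n : ℝ) + 2)⁻¹) ^ (k + 2)) / (k + 2) : ℝ) : ℂ) := by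
    funext k
    rw [show ((k : ℂ) + 2) = ((k : ℕ) : ℂ) + 2 from rfl, aux_zeta k]
    push_cast
    ring
  rw [hfun]
  exact h
end

section
/- Define 𝒫(x) = Σ_{2 ≤ k ≤ x} P(k)/k, where P(k) = Σ_p 1/p^k is the prime zeta function (sum over all rational primes p). Then for every real x ≥ 1, 𝒫(x) < 1 − γ, where γ is the Euler–Mascheroni constant. -/
/-- The prime zeta function `P(k) = Σ_p p^{-k}` (sum over all rational primes). -/
noncomputable def primeZeta (k : ℕ) : ℝ :=
  ∑' p : {p : ℕ // p.Prime}, (1 : ℝ) / (p : ℝ) ^ k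

/-- `𝒫(x) = Σ_{2 ≤ k ≤ x} P(k)/k`. -/
noncomputable def PP (x : ℝ) : ℝ := ∑ k ∈ Finset.Icc 2 ⌊x⌋₊, primeZeta k / (k : ℝ)


open Finset

/-- Majorant for `∑_{k≥2} p^{-k}/k`. -/
noncomputable def psi (p : ℕ) : ℝ :=
  (1/(p:ℝ))^2/2 + (1/(p:ℝ))^3/3 + (1/(p:ℝ))^4/4 + (1/(p:ℝ))^5/(5*(1-1/(p:ℝ)))

lemma sum_pow_div_le {y : ℝ} (h0 : 0 ≤ y) (hy : y ≤ 1/2) (N : ℕ) :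
    ∑ k ∈ Finset.Icc 2 N, y ^ k / k ≤ y^2/2 + y^3/3 + y^4/4 + y^5/(5*(1-y)) := by
  set f : ℕ → ℝ := fun k => if k < 2 then 0 else y ^ k * (if k ≤ 4 then (k:ℝ)⁻¹ else 1/5)
    with hf
  have hfnonneg : ∀ k, 0 ≤ f k := by
    intro k
    rw [hf]
    dsimp only
    split_ifs <;> positivity
  have hfle : ∀ k, f k ≤ y ^ k := by
    intro k
    rw [hf]
    dsimp only
    split_ifs with h1 h2
    · positivity
    · have hk2 : 2 ≤ k := by omega
      have : ((k:ℝ))⁻¹ ≤ 1 := by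
        rw [inv_le_one_iff₀]
        right
        exact_mod_cast Nat.one_le_iff_ne_zero.mpr (by omega)
      nlinarith [pow_nonneg h0 k]
    · nlinarith [pow_nonneg h0 k]
  have hsum : Summable f :=
    Summable.of_nonneg_of_le hfnonneg hfle (summable_geometric_of_lt_one h0 (by linarith))
  have h1 : ∑ k ∈ Finset.Icc 2 N, y ^ k / k ≤ ∑ k ∈ Finset.Icc 2 N, f k := by
    refine Finset.sum_le_sum fun k hk => ?_
    have hk2 : 2 ≤ k := (Finset.mem_Icc.mp hk).1
    rw [hf]
    dsimp only
    rw [if_neg (by omega), div_eq_mul_inv]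
    split_ifs with h4
    · exact le_rfl
    · have h5 : (5:ℝ) ≤ (k:ℝ) := by exact_mod_cast (by omega : 5 ≤ k)
      have : (k:ℝ)⁻¹ ≤ 1/5 := by
        rw [one_div]
        exact inv_anti₀ (by norm_num) h5
      exact mul_le_mul_of_nonneg_left this (pow_nonneg h0 _)
  have h2 : ∑ k ∈ Finset.Icc 2 N, f k ≤ ∑' k, f k :=
    Summable.sum_le_tsum _ (fun k _ => hfnonneg k) hsum
  have h3 : (∑ i ∈ Finset.range 5, f i) + ∑' i, f (i + 5) = ∑' i, f i :=
    Summable.sum_add_tsum_nat_add 5 hsum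
  have h4 : ∑ i ∈ Finset.range 5, f i = y^2/2 + y^3/3 + y^4/4 := by
    rw [hf]
    simp [Finset.sum_range_succ]
    norm_num
    ring
  have h5 : ∑' i, f (i + 5) = y^5/(5*(1-y)) := by
    have hco : ∀ i : ℕ, f (i + 5) = y ^ i * (y^5 * (1/5)) := by
      intro i
      rw [hf]
      dsimp only
      rw [if_neg (by omega), if_neg (by omega)]
      ring
    rw [tsum_congr hco, tsum_mul_right, tsum_geometric_of_lt_one h0 (by linarith)]
    have hne : (5:ℝ) * (1 - y) ≠ 0 := by
      have : (0:ℝ) < 1 - y := by linarith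
      positivity
    rw [eq_div_iff hne]
    have : (1:ℝ) - y ≠ 0 := by linarith
    field_simp
  calc ∑ k ∈ Finset.Icc 2 N, y ^ k / k ≤ ∑' k, f k := le_trans h1 h2
    _ = y^2/2 + y^3/3 + y^4/4 + y^5/(5*(1-y)) := by rw [← h3, h4, h5]

lemma prime_sum_le (N : ℕ) {p : ℕ} (hp : 2 ≤ p) :
    ∑ k ∈ Finset.Icc 2 N, 1/(p:ℝ)^k/k ≤ psi p := by
  have h2 : (2:ℝ) ≤ (p:ℝ) := by exact_mod_cast hp
  have h0 : (0:ℝ) < (p:ℝ) := by linarith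
  have key := sum_pow_div_le (y := 1/(p:ℝ)) (by positivity)
    (by rw [div_le_div_iff₀ h0 two_pos]; linarith) N
  calc ∑ k ∈ Finset.Icc 2 N, 1/(p:ℝ)^k/k
      = ∑ k ∈ Finset.Icc 2 N, (1/(p:ℝ))^k/k := by
        refine Finset.sum_congr rfl fun k _ => ?_
        rw [one_div_pow]
    _ ≤ _ := key

lemma psi_nonneg {n : ℕ} (hn : 2 ≤ n) : 0 ≤ psi n := by
  have h2 : (2:ℝ) ≤ (n:ℝ) := by exact_mod_cast hn
  have hy0 : 0 < 1/(n:ℝ) := by positivity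
  have hy : 1/(n:ℝ) ≤ 1/2 := by
    rw [div_le_div_iff₀ (by linarith) two_pos]; linarith
  unfold psi
  have : (0:ℝ) < 1 - 1/(n:ℝ) := by linarith
  positivity

lemma psi_le_two {n : ℕ} (hn : 2 ≤ n) : psi n ≤ 2 * (1/(n:ℝ)^2) := by
  have h2 : (2:ℝ) ≤ (n:ℝ) := by exact_mod_cast hn
  set y : ℝ := 1/(n:ℝ) with hy'
  have hy0 : 0 < y := by rw [hy']; positivity
  have hy : y ≤ 1/2 := by rw [hy', div_le_div_iff₀ (by linarith) two_pos]; linarith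
  have h1y : (0:ℝ) < 1 - y := by linarith
  have hlast : y^5/(5*(1-y)) ≤ y^5 * (2/5) := by
    rw [div_le_iff₀ (by positivity)]
    nlinarith [pow_nonneg hy0.le 5]
  have hrw : 2 * (1/(n:ℝ)^2) = 2 * y^2 := by rw [hy', one_div_pow]
  rw [psi, ← hy', hrw]
  nlinarith [pow_nonneg hy0.le 2, pow_nonneg hy0.le 3, pow_nonneg hy0.le 4,
    pow_nonneg hy0.le 5, sq_nonneg y]

lemma psi_le_seventeen {n : ℕ} (hn : 17 ≤ n) : psi n ≤ (11/20) * (1/(n:ℝ))^2 := by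
  have h2 : (17:ℝ) ≤ (n:ℝ) := by exact_mod_cast hn
  set y : ℝ := 1/(n:ℝ) with hy'
  have hy0 : 0 < y := by rw [hy']; positivity
  have hy : y ≤ 1/17 := by rw [hy', div_le_div_iff₀ (by linarith) (by norm_num)]; linarith
  have h1y : (0:ℝ) < 1 - y := by linarith
  have hlast : y^5/(5*(1-y)) ≤ y^5 * (17/80) := by
    rw [div_le_iff₀ (by positivity)]
    nlinarith [pow_nonneg hy0.le 5]
  rw [psi, ← hy']
  nlinarith [pow_nonneg hy0.le 2, pow_nonneg hy0.le 3, pow_nonneg hy0.le 4,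
    pow_nonneg hy0.le 5, sq_nonneg y, mul_pos (mul_pos hy0 hy0) hy0]

lemma tele_bound : ∑' m : ℕ, 1/((m:ℝ)+8)^2 ≤ 1/7 := by
  apply Real.tsum_le_of_sum_range_le (fun n => by positivity)
  intro n
  have step : ∀ m ∈ Finset.range n,
      1/((m:ℝ)+8)^2 ≤ 1/((m:ℝ)+7) - 1/(((m+1:ℕ):ℝ)+7) := by
    intro m _
    push_cast
    have h7 : (0:ℝ) < (m:ℝ)+7 := by positivity
    have h8 : (0:ℝ) < (m:ℝ)+8 := by positivity
    have heq : 1/((m:ℝ)+7) - 1/((m:ℝ)+1+7) = 1/(((m:ℝ)+7)*((m:ℝ)+8)) := by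
      rw [div_sub_div _ _ (by linarith) (by linarith)]
      congr 1 <;> ring
    rw [heq]
    apply one_div_le_one_div_of_le (by positivity)
    nlinarith
  calc ∑ m ∈ Finset.range n, 1/((m:ℝ)+8)^2
      ≤ ∑ m ∈ Finset.range n, (1/((m:ℝ)+7) - 1/(((m+1:ℕ):ℝ)+7)) :=
        Finset.sum_le_sum step
    _ = 1/(((0:ℕ):ℝ)+7) - 1/(((n:ℕ):ℝ)+7) :=
        Finset.sum_range_sub' (f := fun m : ℕ => 1/((m:ℝ)+7)) n
    _ ≤ 1/7 := by
        have : (0:ℝ) < (n:ℝ)+7 := by positivity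
        have h := one_div_pos.mpr this
        norm_num
        linarith

lemma summable_one_div_primes_pow {k : ℕ} (hk : 2 ≤ k) :
    Summable (fun p : {p : ℕ // p.Prime} => (1:ℝ)/(p:ℝ)^k) := by
  have h : Summable (fun n : ℕ => (1:ℝ)/(n:ℝ)^k) :=
    Real.summable_one_div_nat_pow.mpr (by omega)
  exact h.subtype _

lemma summable_psi_primes : Summable (fun p : {p : ℕ // p.Prime} => psi p) := by
  have h : Summable (fun n : ℕ => 2 * (1/(n:ℝ)^2)) :=
    (Real.summable_one_div_nat_pow.mpr one_lt_two).mul_left 2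
  have h2 : Summable (fun p : {p : ℕ // p.Prime} => 2 * ((1:ℝ)/((p:ℕ):ℝ)^2)) := h.subtype _
  exact Summable.of_nonneg_of_le (fun p => psi_nonneg p.2.two_le)
    (fun p => psi_le_two p.2.two_le) h2

lemma tsum_psi_le : ∑' p : {p : ℕ // p.Prime}, psi p ≤ 1/3 := by
  classical
  set I : ℕ → ℝ := fun n => if n.Prime then psi n else 0 with hI
  have hInonneg : ∀ n, 0 ≤ I n := by
    intro n
    rw [hI]; dsimp only; split_ifs with h
    · exact psi_nonneg h.two_le
    · exact le_rfl
  have hIle : ∀ n, I n ≤ 2 * (1/(n:ℝ)^2) := by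
    intro n
    rw [hI]; dsimp only; split_ifs with h
    · exact psi_le_two h.two_le
    · positivity
  have hIsum : Summable I :=
    Summable.of_nonneg_of_le hInonneg hIle
      ((Real.summable_one_div_nat_pow.mpr one_lt_two).mul_left 2)
  have heq : ∑' p : {p : ℕ // p.Prime}, psi p = ∑' n, I n := by
    have h0 : ∑' p : {p : ℕ // p.Prime}, psi p = ∑' p : ↥{n : ℕ | n.Prime}, psi ↑p := rfl
    rw [h0, _root_.tsum_subtype]
    refine tsum_congr fun n => ?_
    by_cases h : n.Prime <;> simp [Set.indicator_apply, hI, h, Set.mem_setOf_eq]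
  have hsplit : (∑ i ∈ Finset.range 17, I i) + ∑' n, I (n + 17) = ∑' n, I n :=
    Summable.sum_add_tsum_nat_add 17 hIsum
  have hshift : Summable fun n => I (n + 17) := (summable_nat_add_iff (f := I) 17).mpr hIsum
  have heven : Summable fun m => I (2*m + 17) := by
    have hinj : Function.Injective (fun m : ℕ => 2*m) := fun a b h => by
      dsimp at h; omega
    exact hshift.comp_injective hinj
  have hodd : Summable fun m => I (2*m + 1 + 17) := by
    have hinj : Function.Injective (fun m : ℕ => 2*m + 1) := fun a b h => by
      dsimp at h; omega
    exact hshift.comp_injective hinj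
  have h6 : (∑' m : ℕ, I (2*m + 17)) + ∑' m : ℕ, I (2*m + 1 + 17) = ∑' n, I (n + 17) := by
    simpa using tsum_even_add_odd (f := fun n => I (n + 17)) heven hodd
  have hoddzero : ∑' m : ℕ, I (2*m + 1 + 17) = 0 := by
    have hz : ∀ m : ℕ, I (2*m + 1 + 17) = 0 := by
      intro m
      rw [hI]; dsimp only
      rw [if_neg]
      intro hpr
      rcases (Nat.Prime.eq_one_or_self_of_dvd hpr 2 ⟨m + 9, by ring⟩) with h | h <;> omega
    simp [hz]
  have hsum2 : Summable fun m : ℕ => (11/80) * (1/((m:ℝ)+8)^2) := by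
    have hb : Summable (fun m : ℕ => 1/(((m:ℕ):ℝ)+8)^2) := by
      have := (summable_nat_add_iff (f := fun n : ℕ => 1/(n:ℝ)^2) 8).mpr
        (Real.summable_one_div_nat_pow.mpr one_lt_two)
      exact this.congr fun m => by push_cast; ring
    exact hb.mul_left _
  have hevenle : ∑' m : ℕ, I (2*m + 17) ≤ 11/560 := by
    have hle : ∀ m : ℕ, I (2*m + 17) ≤ (11/80) * (1/((m:ℝ)+8)^2) := by
      intro m
      rw [hI]; dsimp only
      split_ifs with h
      · calc psi (2*m+17) ≤ (11/20) * (1/((2*m+17:ℕ):ℝ))^2 :=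
              psi_le_seventeen (by omega)
          _ ≤ (11/80) * (1/((m:ℝ)+8)^2) := by
              have h1 : ((2*m+17:ℕ):ℝ) = 2*(m:ℝ)+17 := by push_cast; ring
              rw [h1, div_pow, one_pow]
              have h2 : (0:ℝ) < ((m:ℝ)+8)^2 := by positivity
              have h3 : (0:ℝ) < (2*(m:ℝ)+17)^2 := by positivity
              rw [mul_one_div, mul_one_div, div_le_div_iff₀ h3 h2]
              have hm : (0:ℝ) ≤ (m:ℝ) := Nat.cast_nonneg m
              nlinarith
      · positivity
    calc ∑' m : ℕ, I (2*m + 17) ≤ ∑' m : ℕ, (11/80) * (1/((m:ℝ)+8)^2) :=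
          Summable.tsum_le_tsum hle heven hsum2
      _ = (11/80) * ∑' m : ℕ, 1/((m:ℝ)+8)^2 := tsum_mul_left
      _ ≤ (11/80) * (1/7) :=
          mul_le_mul_of_nonneg_left tele_bound (by norm_num)
      _ = 11/560 := by norm_num
  have hhead : ∑ i ∈ Finset.range 17, I i = psi 2 + psi 3 + psi 5 + psi 7 + psi 11 + psi 13 := by
    rw [hI]
    simp only [Finset.sum_range_succ, Finset.sum_range_zero]
    norm_num
  have htail : ∑' n, I (n + 17) ≤ 11/560 := by
    rw [← h6, hoddzero]
    linarith
  have hfin : psi 2 + psi 3 + psi 5 + psi 7 + psi 11 + psi 13 + 11/560 ≤ 1/3 := by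
    norm_num [psi]
  calc ∑' p : {p : ℕ // p.Prime}, psi p = ∑' n, I n := heq
    _ = (∑ i ∈ Finset.range 17, I i) + ∑' n, I (n + 17) := hsplit.symm
    _ ≤ (psi 2 + psi 3 + psi 5 + psi 7 + psi 11 + psi 13) + 11/560 := by
        rw [hhead]; linarith
    _ ≤ 1/3 := by linarith

/-- For every real `x ≥ 1`, `𝒫(x) < 1 − γ`, where `γ` is the Euler–Mascheroni constant. -/
theorem PP_lt_one_sub_gamma (x : ℝ) (hx : 1 ≤ x) :
    PP x < 1 - Real.eulerMascheroniConstant := by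
  have hsummand : ∀ k ∈ Finset.Icc 2 ⌊x⌋₊,
      Summable (fun p : {p : ℕ // p.Prime} => (1:ℝ)/(p:ℝ)^k/k) :=
    fun k hk => (summable_one_div_primes_pow (Finset.mem_Icc.mp hk).1).div_const _
  have hA : PP x = ∑' p : {p : ℕ // p.Prime}, ∑ k ∈ Finset.Icc 2 ⌊x⌋₊, (1:ℝ)/(p:ℝ)^k/k := by
    have h1 : ∑' (p : {p : ℕ // p.Prime}), ∑ k ∈ Finset.Icc 2 ⌊x⌋₊, (1:ℝ)/(p:ℝ)^k/k
        = ∑ k ∈ Finset.Icc 2 ⌊x⌋₊, ∑' (p : {p : ℕ // p.Prime}), (1:ℝ)/(p:ℝ)^k/k :=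
      Summable.tsum_finsetSum hsummand
    rw [PP, h1]
    exact Finset.sum_congr rfl fun k hk => by rw [primeZeta, tsum_div_const]
  have hB : ∑' p : {p : ℕ // p.Prime}, ∑ k ∈ Finset.Icc 2 ⌊x⌋₊, (1:ℝ)/(p:ℝ)^k/k
      ≤ ∑' p : {p : ℕ // p.Prime}, psi p := by
    refine Summable.tsum_le_tsum (fun p => ?_) (summable_sum hsummand) summable_psi_primes
    exact prime_sum_le _ p.2.two_le
  have hγ := Real.eulerMascheroniConstant_lt_two_thirds
  calc PP x = _ := hA
    _ ≤ ∑' p : {p : ℕ // p.Prime}, psi p := hB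
    _ ≤ 1/3 := tsum_psi_le
    _ < 1 - Real.eulerMascheroniConstant := by linarith
end

section
/- Let K be a number field of degree d with ring of integers O_K. Then for every real x ≥ 2, the sum of 1/N(𝔭) over all prime ideals 𝔭 of O_K whose norm N(𝔭) is a proper prime power (i.e. N(𝔭) = p^ℓ for a rational prime p and an integer ℓ ≥ 2) and satisfies N(𝔭) ≤ x, is at most 0.32·d. -/
open Finset NumberField

private lemma tele (N : ℕ) (hN : 5 ≤ N) :
    ∑ k ∈ Finset.Ico 5 N, ((1:ℝ)/((k:ℝ)-1) - 1/k) = 1/4 - 1/((N:ℝ)-1) := by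
  induction N, hN using Nat.le_induction with
  | base => simp; norm_num
  | succ n hn ih =>
    rw [Finset.sum_Ico_succ_top hn, ih]
    have h1 : (1:ℝ) ≤ (n:ℝ) := by exact_mod_cast Nat.one_le_iff_ne_zero.mpr (by omega)
    push_cast
    ring

private lemma prime_sum_le_s18 (Q : Finset ℕ) (hQ : ∀ q ∈ Q, q.Prime) :
    ∑ q ∈ Q, (1:ℝ)/(q:ℝ)^2 ≤ 0.64 := by
  classical
  have hsplit : ∑ q ∈ Q, (1:ℝ)/(q:ℝ)^2 =
      ∑ q ∈ Q.filter (· < 5), (1:ℝ)/(q:ℝ)^2 + ∑ q ∈ Q.filter (¬ · < 5), (1:ℝ)/(q:ℝ)^2 :=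
    (Finset.sum_filter_add_sum_filter_not Q _ _).symm
  have hsmall : ∑ q ∈ Q.filter (· < 5), (1:ℝ)/(q:ℝ)^2 ≤ 1/4 + 1/9 := by
    have hsub : Q.filter (· < 5) ⊆ ({2, 3} : Finset ℕ) := by
      intro q hq
      simp only [Finset.mem_filter] at hq
      obtain ⟨hqQ, hq5⟩ := hq
      have hp := hQ q hqQ
      interval_cases q <;> first
        | exact absurd hp (by decide)
        | simp
    calc ∑ q ∈ Q.filter (· < 5), (1:ℝ)/(q:ℝ)^2
        ≤ ∑ q ∈ ({2,3} : Finset ℕ), (1:ℝ)/(q:ℝ)^2 := by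
          apply Finset.sum_le_sum_of_subset_of_nonneg hsub
          intro i _ _; positivity
      _ = 1/4 + 1/9 := by norm_num
  have hbig : ∑ q ∈ Q.filter (¬ · < 5), (1:ℝ)/(q:ℝ)^2 ≤ 1/4 := by
    set Q' := Q.filter (¬ · < 5) with hQ'
    have h5 : ∀ q ∈ Q', 5 ≤ q := by intro q hq; simp [hQ'] at hq; omega
    set N := Q.sup id + 5 with hN
    have hsub : Q' ⊆ Finset.Ico 5 N := by
      intro q hq
      refine Finset.mem_Ico.mpr ⟨h5 q hq, ?_⟩
      have : q ≤ Q.sup id := Finset.le_sup (f := id) (Finset.mem_of_mem_filter q hq)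
      omega
    have hterm : ∀ q ∈ Q', (1:ℝ)/(q:ℝ)^2 ≤ 1/((q:ℝ)-1) - 1/q := by
      intro q hq
      have h5q : (5:ℝ) ≤ (q:ℝ) := by exact_mod_cast h5 q hq
      rw [div_sub_div _ _ (by linarith) (by linarith)]
      rw [div_le_div_iff₀ (by positivity) (by nlinarith)]
      nlinarith
    calc ∑ q ∈ Q', (1:ℝ)/(q:ℝ)^2 ≤ ∑ q ∈ Q', ((1:ℝ)/((q:ℝ)-1) - 1/q) :=
          Finset.sum_le_sum hterm
      _ ≤ ∑ q ∈ Finset.Ico 5 N, ((1:ℝ)/((q:ℝ)-1) - 1/q) := by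
          apply Finset.sum_le_sum_of_subset_of_nonneg hsub
          intro i hi _
          have h5i : (5:ℝ) ≤ (i:ℝ) := by
            have := (Finset.mem_Ico.mp hi).1; exact_mod_cast this
          rw [sub_nonneg]
          exact one_div_le_one_div_of_le (by linarith) (by linarith)
      _ = 1/4 - 1/((N:ℝ)-1) := tele N (by omega)
      _ ≤ 1/4 := by
          have : (5:ℝ) ≤ (N:ℝ) := by exact_mod_cast (by omega : 5 ≤ N)
          have : 0 < (N:ℝ)-1 := by linarith
          have : 0 ≤ 1/((N:ℝ)-1) := by positivity
          linarith
  rw [hsplit]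
  have : (1:ℝ)/4 + 1/9 + 1/4 ≤ 0.64 := by norm_num
  linarith

private lemma card_fiber_le (K : Type*) [Field K] [NumberField K]
    (d : ℕ) (hd : d = Module.finrank ℚ K) (p : ℕ) (hp : p.Prime)
    (U : Finset (Ideal (𝓞 K)))
    (hU : ∀ P ∈ U, P.IsPrime ∧ ∃ ℓ : ℕ, 2 ≤ ℓ ∧ Ideal.absNorm P = p ^ ℓ) :
    2 * U.card ≤ d := by
  have hdvd : ∀ P ∈ U, P ∣ Ideal.span {(p : 𝓞 K)} := by
    intro P hP
    obtain ⟨hPpr, ℓ, hℓ, hN⟩ := hU P hP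
    have hmem : ((Ideal.absNorm P : 𝓞 K)) ∈ P := Ideal.absNorm_mem P
    rw [hN] at hmem
    push_cast at hmem
    have hpP : (p : 𝓞 K) ∈ P := hPpr.mem_of_pow_mem ℓ hmem
    rw [Ideal.dvd_iff_le, Ideal.span_le]
    simpa using hpP
  have hprime : ∀ P ∈ U, Prime P := by
    intro P hP
    obtain ⟨hPpr, ℓ, hℓ, hN⟩ := hU P hP
    refine Ideal.prime_of_isPrime ?_ hPpr
    intro hbot
    rw [hbot, Ideal.absNorm_bot] at hN
    exact (pow_ne_zero ℓ hp.ne_zero) hN.symm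
  have hprod : (∏ P ∈ U, P) ∣ Ideal.span {(p : 𝓞 K)} :=
    Finset.prod_primes_dvd _ hprime hdvd
  have h1 : Ideal.absNorm (∏ P ∈ U, P) ∣ Ideal.absNorm (Ideal.span {(p : 𝓞 K)}) :=
    Ideal.absNorm_dvd_absNorm_of_le (Ideal.le_of_dvd hprod)
  have hnormspan : Ideal.absNorm (Ideal.span {((p : ℕ) : 𝓞 K)}) = p ^ d := by
    have hb := Module.Free.chooseBasis ℤ (𝓞 K)
    rw [show ((p : ℕ) : 𝓞 K) = algebraMap ℤ (𝓞 K) ((p : ℕ) : ℤ) by simp,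
      Ideal.absNorm_span_singleton, Algebra.norm_algebraMap_of_basis hb]
    have hcard : Fintype.card (Module.Free.ChooseBasisIndex ℤ (𝓞 K)) = d := by
      rw [← Module.finrank_eq_card_chooseBasisIndex, RingOfIntegers.rank, ← hd]
    rw [hcard]
    simp [Int.natAbs_pow]
  have hpow : p ^ (2 * U.card) ∣ Ideal.absNorm (∏ P ∈ U, P) := by
    rw [map_prod Ideal.absNorm]
    have h2 : ∀ P ∈ U, p ^ 2 ∣ Ideal.absNorm P := by
      intro P hP
      obtain ⟨_, ℓ, hℓ, hN⟩ := hU P hP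
      rw [hN]; exact pow_dvd_pow p hℓ
    calc p ^ (2 * U.card) = ∏ _P ∈ U, p ^ 2 := by
          rw [Finset.prod_const, ← pow_mul, mul_comm]
      _ ∣ ∏ P ∈ U, Ideal.absNorm P := Finset.prod_dvd_prod_of_dvd _ _ h2
  have hfin : p ^ (2 * U.card) ∣ p ^ d := by
    rw [← hnormspan]; exact hpow.trans h1
  exact (Nat.pow_dvd_pow_iff_le_right hp.one_lt).mp hfin



/-- Let `K` be a number field of degree `d`. For every real `x ≥ 2`, the sum of `1/N(𝔭)`
over the prime ideals `𝔭` of `O_K` whose norm is a proper prime power `p^ℓ` (`ℓ ≥ 2`)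
and satisfies `N(𝔭) ≤ x` is at most `0.32 d`. -/
theorem sum_inv_norm_proper_prime_powers_le (K : Type*) [Field K] [NumberField K]
    (d : ℕ) (hd : d = Module.finrank ℚ K) (x : ℝ) (hx : 2 ≤ x) :
    (∑' P : {P : Ideal (NumberField.RingOfIntegers K) //
        P.IsPrime ∧ (∃ p ℓ : ℕ, p.Prime ∧ 2 ≤ ℓ ∧ Ideal.absNorm P = p ^ ℓ) ∧
        (Ideal.absNorm P : ℝ) ≤ x},
      (1 : ℝ) / (Ideal.absNorm P.1 : ℝ)) ≤ 0.32 * (d : ℝ) := by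
  classical
  have hfin : {P : Ideal (NumberField.RingOfIntegers K) |
      P.IsPrime ∧ (∃ p ℓ : ℕ, p.Prime ∧ 2 ≤ ℓ ∧ Ideal.absNorm P = p ^ ℓ) ∧
      (Ideal.absNorm P : ℝ) ≤ x}.Finite :=
    (Ideal.finite_setOf_absNorm_le ⌊x⌋₊).subset (fun P hP => Nat.le_floor hP.2.2)
  letI : Fintype {P : Ideal (NumberField.RingOfIntegers K) //
      P.IsPrime ∧ (∃ p ℓ : ℕ, p.Prime ∧ 2 ≤ ℓ ∧ Ideal.absNorm P = p ^ ℓ) ∧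
      (Ideal.absNorm P : ℝ) ≤ x} := hfin.fintype
  set T := hfin.toFinset with hTdef
  have hmem : ∀ P, P ∈ T ↔ (P.IsPrime ∧ (∃ p ℓ : ℕ, p.Prime ∧ 2 ≤ ℓ ∧ Ideal.absNorm P = p ^ ℓ) ∧
      (Ideal.absNorm P : ℝ) ≤ x) := fun P => hfin.mem_toFinset
  rw [tsum_fintype, ← Finset.sum_subtype T hmem (fun P => (1:ℝ)/(Ideal.absNorm P : ℝ))]
  have hT : ∀ P ∈ T, P.IsPrime ∧ (∃ p ℓ : ℕ, p.Prime ∧ 2 ≤ ℓ ∧ Ideal.absNorm P = p ^ ℓ) := by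
    intro P hP
    rw [hmem] at hP
    exact ⟨hP.1, hP.2.1⟩
  set c : Ideal (NumberField.RingOfIntegers K) → ℕ := fun P => (Ideal.absNorm P).minFac with hc
  have hcP : ∀ P ∈ T, (c P).Prime ∧ ∃ ℓ : ℕ, 2 ≤ ℓ ∧ Ideal.absNorm P = (c P) ^ ℓ := by
    intro P hP
    obtain ⟨_, p, ℓ, hp, hℓ, hN⟩ := hT P hP
    have : c P = p := by rw [hc]; simp only; rw [hN, hp.pow_minFac (by omega)]
    rw [this]
    exact ⟨hp, ℓ, hℓ, hN⟩
  rw [← Finset.sum_fiberwise_of_maps_to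
    (g := c) (fun P hP => Finset.mem_image_of_mem c hP) (fun P => (1:ℝ)/(Ideal.absNorm P : ℝ))]
  have hqprime : ∀ q ∈ T.image c, q.Prime := by
    intro q hq
    obtain ⟨P, hP, rfl⟩ := Finset.mem_image.mp hq
    exact (hcP P hP).1
  have hfiber : ∀ q ∈ T.image c,
      ∑ P ∈ T.filter (fun P => c P = q), (1:ℝ)/(Ideal.absNorm P : ℝ)
        ≤ ((d : ℝ)/2) * ((1:ℝ)/(q:ℝ)^2) := by
    intro q hq
    have hqp : q.Prime := hqprime q hq
    set U := T.filter (fun P => c P = q) with hU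
    have hUmem : ∀ P ∈ U, P.IsPrime ∧ ∃ ℓ : ℕ, 2 ≤ ℓ ∧ Ideal.absNorm P = q ^ ℓ := by
      intro P hP
      obtain ⟨hPT, hcq⟩ := Finset.mem_filter.mp hP
      obtain ⟨_, ℓ, hℓ, hN⟩ := hcP P hPT
      exact ⟨(hT P hPT).1, ℓ, hℓ, by rw [← hcq]; exact hN⟩
    have hcard : 2 * U.card ≤ d := card_fiber_le K d hd q hqp U hUmem
    have hterm : ∀ P ∈ U, (1:ℝ)/(Ideal.absNorm P : ℝ) ≤ (1:ℝ)/(q:ℝ)^2 := by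
      intro P hP
      obtain ⟨_, ℓ, hℓ, hN⟩ := hUmem P hP
      have h1 : (q:ℝ)^2 ≤ (Ideal.absNorm P : ℝ) := by
        rw [hN]
        push_cast
        exact pow_le_pow_right₀ (by exact_mod_cast hqp.one_lt.le) hℓ
      apply one_div_le_one_div_of_le
      · have := hqp.one_lt; positivity
      · exact h1
    calc ∑ P ∈ U, (1:ℝ)/(Ideal.absNorm P : ℝ)
        ≤ U.card • ((1:ℝ)/(q:ℝ)^2) := Finset.sum_le_card_nsmul U _ _ hterm
      _ = (U.card : ℝ) * ((1:ℝ)/(q:ℝ)^2) := by rw [nsmul_eq_mul]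
      _ ≤ ((d : ℝ)/2) * ((1:ℝ)/(q:ℝ)^2) := by
          apply mul_le_mul_of_nonneg_right _ (by positivity)
          have : (2:ℝ) * (U.card : ℝ) ≤ (d:ℝ) := by exact_mod_cast hcard
          linarith
  calc ∑ q ∈ T.image c, ∑ P ∈ T.filter (fun P => c P = q), (1:ℝ)/(Ideal.absNorm P : ℝ)
      ≤ ∑ q ∈ T.image c, ((d : ℝ)/2) * ((1:ℝ)/(q:ℝ)^2) := Finset.sum_le_sum hfiber
    _ = ((d : ℝ)/2) * ∑ q ∈ T.image c, (1:ℝ)/(q:ℝ)^2 := by rw [Finset.mul_sum]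
    _ ≤ ((d : ℝ)/2) * 0.64 := by
        apply mul_le_mul_of_nonneg_left (prime_sum_le_s18 _ hqprime) (by positivity)
    _ = 0.32 * (d : ℝ) := by ring
end
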